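/- arXiv:2207.11183 — 6 statements merged into one kernel-verified Lean document; each statement's English description precedes it below -/
import Mathlib

section
/- Let G and F be finite simple graphs. Let (Γ_i)_{i∈V(G)} be complex d₁×d₁ orthogonal projection matrices with Γ_iΓ_j = 0 for all edges (i,j) of G, and let w^G : V(G) → ℝ≥0 satisfy Σ_{i∈I} w^G_i ≤ 1 for every independent set I of G and Σ_i w^G_i Γ_i ≥ η₁·𝟙 in the Loewner (positive semidefinite) order, with η₁ ≥ 0. Similarly let (Ω_j)_{j∈V(F)} be d₂×d₂ orthogonal projections with Ω_jΩ_k = 0 for edges of F, and w^F : V(F) → ℝ≥0 with Σ_{j∈J} w^F_j ≤ 1 for every independent set J of F and Σ_j w^F_j Ω_j ≥ η₂·𝟙, with η₂ ≥ 0. Then the weights w(i,j) = w^G_i·w^F_j satisfy Σ_{(i,j)∈K} w(i,j) ≤ 1 for every independent set K of the disjunctive product G∨F, and Σ_{i,j} w(i,j)·(Γ_i ⊗ Ω_j) ≥ η₁η₂·𝟙 on ℂ^{d₁d₂}. -/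
open scoped Classical ComplexOrder Kronecker
noncomputable section

/-- The disjunctive product of two simple graphs. -/
def disjProd {α β : Type*} (G : SimpleGraph α) (F : SimpleGraph β) :
    SimpleGraph (α × β) where
  Adj p q := G.Adj p.1 q.1 ∨ F.Adj p.2 q.2
  symm := ⟨fun _ _ h => h.imp (fun h' => h'.symm) (fun h' => h'.symm)⟩
  loopless := ⟨fun p h => h.elim (G.loopless.irrefl p.1) (F.loopless.irrefl p.2)⟩

/-- A set of vertices is independent if it is pairwise non-adjacent. -/
def IsIndep {α : Type*} (G : SimpleGraph α) (S : Set α) : Prop :=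
  S.Pairwise fun a b => ¬ G.Adj a b

section Aux

open Matrix

variable {m n : Type*} [Fintype m] [Fintype n]

lemma psd_add {A B : Matrix n n ℂ} (hA : A.PosSemidef) (hB : B.PosSemidef) :
    (A + B).PosSemidef := by
  exact hA.add hB

lemma psd_smul {c : ℝ} (hc : 0 ≤ c) {A : Matrix n n ℂ} (hA : A.PosSemidef) :
    ((c : ℂ) • A).PosSemidef := by
  refine ⟨?_, fun x => ?_⟩
  · unfold Matrix.IsHermitian
    rw [conjTranspose_smul, hA.1]
    congr 1
    simp
  · exact (hA.smul (a := (c : ℂ)) (by exact_mod_cast hc)).2 x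

lemma kron_conjTranspose (A : Matrix m m ℂ) (B : Matrix n n ℂ) :
    (A ⊗ₖ B)ᴴ = Aᴴ ⊗ₖ Bᴴ := by
  ext ⟨i, j⟩ ⟨k, l⟩
  simp [Matrix.conjTranspose_apply, Matrix.kroneckerMap_apply, mul_comm]

lemma psd_kron {A : Matrix m m ℂ} {B : Matrix n n ℂ}
    (hA : A.PosSemidef) (hB : B.PosSemidef) : (A ⊗ₖ B).PosSemidef := by
  exact hA.kronecker hB

lemma sub_kron (A B : Matrix m m ℂ) (C : Matrix n n ℂ) :
    (A - B) ⊗ₖ C = A ⊗ₖ C - B ⊗ₖ C := by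
  ext ⟨i, j⟩ ⟨k, l⟩
  simp [Matrix.kroneckerMap_apply, sub_mul]

lemma kron_sub (A : Matrix m m ℂ) (B C : Matrix n n ℂ) :
    A ⊗ₖ (B - C) = A ⊗ₖ B - A ⊗ₖ C := by
  ext ⟨i, j⟩ ⟨k, l⟩
  simp [Matrix.kroneckerMap_apply, mul_sub]

end Aux

theorem kronecker_SIC {α β : Type*} [Fintype α] [Fintype β]
    (G : SimpleGraph α) (F : SimpleGraph β) (d₁ d₂ : ℕ)
    (Γ : α → Matrix (Fin d₁) (Fin d₁) ℂ) (Ω : β → Matrix (Fin d₂) (Fin d₂) ℂ)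
    (hΓherm : ∀ i, (Γ i).IsHermitian) (hΓidem : ∀ i, Γ i * Γ i = Γ i)
    (hΓorth : ∀ i j, G.Adj i j → Γ i * Γ j = 0)
    (hΩherm : ∀ j, (Ω j).IsHermitian) (hΩidem : ∀ j, Ω j * Ω j = Ω j)
    (hΩorth : ∀ j k, F.Adj j k → Ω j * Ω k = 0)
    (wG : α → ℝ) (hwG0 : ∀ i, 0 ≤ wG i)
    (hwGI : ∀ I : Finset α, IsIndep G ↑I → ∑ i ∈ I, wG i ≤ 1)
    (wF : β → ℝ) (hwF0 : ∀ j, 0 ≤ wF j)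
    (hwFJ : ∀ J : Finset β, IsIndep F ↑J → ∑ j ∈ J, wF j ≤ 1)
    (η₁ η₂ : ℝ) (hη₁ : 0 ≤ η₁) (hη₂ : 0 ≤ η₂)
    (hΓop : Matrix.PosSemidef (∑ i, (wG i : ℂ) • Γ i - (η₁ : ℂ) • 1))
    (hΩop : Matrix.PosSemidef (∑ j, (wF j : ℂ) • Ω j - (η₂ : ℂ) • 1)) :
    (∀ K : Finset (α × β), IsIndep (disjProd G F) ↑K →
      ∑ p ∈ K, wG p.1 * wF p.2 ≤ 1) ∧
    Matrix.PosSemidef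
      (∑ p : α × β, ((wG p.1 * wF p.2 : ℝ) : ℂ) • (Γ p.1 ⊗ₖ Ω p.2)
        - ((η₁ * η₂ : ℝ) : ℂ) • 1) := by
  constructor
  · -- weight bound on independent sets of the disjunctive product
    intro K hK
    set I : Finset α := K.image Prod.fst with hI
    have hfib : ∑ p ∈ K, wG p.1 * wF p.2
        = ∑ i ∈ I, ∑ p ∈ K.filter (fun p => p.1 = i), wG p.1 * wF p.2 :=
      (Finset.sum_fiberwise_of_maps_to (fun p hp => Finset.mem_image_of_mem _ hp) _).symm
    rw [hfib]
    have hinner : ∀ i ∈ I,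
        ∑ p ∈ K.filter (fun p => p.1 = i), wG p.1 * wF p.2 ≤ wG i := by
      intro i _
      have h1 : ∑ p ∈ K.filter (fun p => p.1 = i), wG p.1 * wF p.2
          = wG i * ∑ p ∈ K.filter (fun p => p.1 = i), wF p.2 := by
        rw [Finset.mul_sum]
        refine Finset.sum_congr rfl fun p hp => ?_
        rw [(Finset.mem_filter.mp hp).2]
      rw [h1]
      have hinj : ∀ p ∈ K.filter (fun p => p.1 = i), ∀ q ∈ K.filter (fun p => p.1 = i),
          p.2 = q.2 → p = q := by
        intro p hp q hq h2
        have := (Finset.mem_filter.mp hp).2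
        have := (Finset.mem_filter.mp hq).2
        exact Prod.ext (by simp_all) h2
      have hsum : ∑ p ∈ K.filter (fun p => p.1 = i), wF p.2
          = ∑ j ∈ (K.filter (fun p => p.1 = i)).image Prod.snd, wF j :=
        (Finset.sum_image hinj).symm
      have hindep : IsIndep F ↑((K.filter (fun p => p.1 = i)).image Prod.snd) := by
        intro j hj j' hj' hjj'
        simp only [Finset.coe_image, Set.mem_image, Finset.mem_coe,
          Finset.mem_filter] at hj hj'
        obtain ⟨p, ⟨hpK, hp1⟩, hp2⟩ := hj
        obtain ⟨q, ⟨hqK, hq1⟩, hq2⟩ := hj'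
        have hpq : p ≠ q := fun h => hjj' (by rw [← hp2, ← hq2, h])
        have hnadj := hK (Finset.mem_coe.mpr hpK) (Finset.mem_coe.mpr hqK) hpq
        intro hadj
        exact hnadj (by show _ ∨ _; exact Or.inr (by rw [hp2, hq2]; exact hadj))
      calc wG i * ∑ p ∈ K.filter (fun p => p.1 = i), wF p.2
          ≤ wG i * 1 := by
            refine mul_le_mul_of_nonneg_left ?_ (hwG0 i)
            rw [hsum]
            exact hwFJ _ hindep
        _ = wG i := mul_one _
    have hIindep : IsIndep G ↑I := by
      intro i hi i' hi' hii'
      simp only [hI, Finset.coe_image, Set.mem_image, Finset.mem_coe] at hi hi'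
      obtain ⟨p, hpK, hp1⟩ := hi
      obtain ⟨q, hqK, hq1⟩ := hi'
      have hpq : p ≠ q := fun h => hii' (by rw [← hp1, ← hq1, h])
      have hnadj := hK (Finset.mem_coe.mpr hpK) (Finset.mem_coe.mpr hqK) hpq
      intro hadj
      exact hnadj (by show _ ∨ _; exact Or.inl (by rwa [hp1, hq1]))
    calc ∑ i ∈ I, ∑ p ∈ K.filter (fun p => p.1 = i), wG p.1 * wF p.2
        ≤ ∑ i ∈ I, wG i := Finset.sum_le_sum hinner
      _ ≤ 1 := hwGI I hIindep
  · -- positive semidefiniteness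
    set A : Matrix (Fin d₁) (Fin d₁) ℂ := ∑ i, (wG i : ℂ) • Γ i with hA
    set B : Matrix (Fin d₂) (Fin d₂) ℂ := ∑ j, (wF j : ℂ) • Ω j with hB
    have hS : (∑ p : α × β, ((wG p.1 * wF p.2 : ℝ) : ℂ) • (Γ p.1 ⊗ₖ Ω p.2)) = A ⊗ₖ B := by
      ext ⟨i, j⟩ ⟨k, l⟩
      simp only [Matrix.sum_apply, Matrix.smul_apply, Matrix.kroneckerMap_apply,
        smul_eq_mul, hA, hB, Complex.ofReal_mul]
      rw [Fintype.sum_prod_type, Finset.sum_mul_sum]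
      refine Finset.sum_congr rfl fun a _ => Finset.sum_congr rfl fun b _ => ?_
      ring
    rw [hS]
    have hBpsd : B.PosSemidef := by
      have := psd_add hΩop (psd_smul hη₂ (Matrix.PosSemidef.one))
      simpa using this
    have h1psd : ((η₁ : ℂ) • (1 : Matrix (Fin d₁) (Fin d₁) ℂ)).PosSemidef :=
      psd_smul hη₁ Matrix.PosSemidef.one
    have hkey : A ⊗ₖ B - ((η₁ * η₂ : ℝ) : ℂ) • 1
        = (A - (η₁ : ℂ) • 1) ⊗ₖ B + ((η₁ : ℂ) • 1) ⊗ₖ (B - (η₂ : ℂ) • 1) := by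
      rw [sub_kron, kron_sub, Matrix.smul_kronecker, Matrix.smul_kronecker,
        Matrix.kronecker_smul, Matrix.one_kronecker_one, smul_smul, Complex.ofReal_mul]
      abel
    rw [hkey]
    exact psd_add (psd_kron hΓop hBpsd) (psd_kron h1psd hΩop)
end
end

section
/- Let ℓ > 1 be an odd integer and m ≥ 1. There is no family (P_j)_{j∈ZMod ℓ} of complex 2m×2m orthogonal projection matrices, each of rank m, such that P_j·P_{j+1} = 0 for every j ∈ ZMod ℓ (indices modulo ℓ). In other words, the odd cycle C_ℓ has no rank-m projective representation in dimension 2m. -/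
open scoped Classical ComplexOrder Kronecker
noncomputable section

/-- The cycle graph on `ZMod n`, where `j` is adjacent to `j ± 1`. -/
def cycGraph (n : ℕ) : SimpleGraph (ZMod n) where
  Adj j k := j ≠ k ∧ (k = j + 1 ∨ j = k + 1)
  symm := ⟨fun _ _ h => ⟨h.1.symm, h.2.symm⟩⟩
  loopless := ⟨fun _ h => h.1 rfl⟩

open Matrix LinearMap Submodule in

-- key lemma: two orthogonal half-rank projections are complementary
theorem key_compl {m : ℕ}
    (A B : Matrix (Fin (2 * m)) (Fin (2 * m)) ℂ)
    (hA : A * A = A) (hB : B * B = B)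
    (hrA : A.rank = m) (hrB : B.rank = m)
    (hAB : A * B = 0) (hBA : B * A = 0) :
    B = 1 - A := by
  set S := A + B with hS
  -- ranges
  have hmemA : ∀ x, x ∈ LinearMap.range A.mulVecLin → A *ᵥ x = x := by
    rintro x ⟨y, rfl⟩
    simp only [mulVecLin_apply, mulVec_mulVec, hA]
  have hmemB : ∀ x, x ∈ LinearMap.range B.mulVecLin → B *ᵥ x = x := by
    rintro x ⟨y, rfl⟩
    simp only [mulVecLin_apply, mulVec_mulVec, hB]
  have hinf : LinearMap.range A.mulVecLin ⊓ LinearMap.range B.mulVecLin = ⊥ := by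
    rw [eq_bot_iff]
    rintro x ⟨hx1, hx2⟩
    have h1 := hmemA x hx1
    have h2 := hmemB x hx2
    have : A *ᵥ (B *ᵥ x) = x := by rw [h2, h1]
    rw [mulVec_mulVec, hAB, zero_mulVec] at this
    simp [← this]
  have hsub : LinearMap.range A.mulVecLin ⊔ LinearMap.range B.mulVecLin ≤
      LinearMap.range S.mulVecLin := by
    apply sup_le
    · rintro x hx
      refine ⟨x, ?_⟩
      have h1 := hmemA x hx
      have h2 : B *ᵥ x = 0 := by
        have : B *ᵥ (A *ᵥ x) = B *ᵥ x := by rw [h1]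
        rwa [mulVec_mulVec, hBA, zero_mulVec, eq_comm] at this
      simp [hS, add_mulVec, h1, h2, mulVecLin_apply]
    · rintro x hx
      refine ⟨x, ?_⟩
      have h1 := hmemB x hx
      have h2 : A *ᵥ x = 0 := by
        have : A *ᵥ (B *ᵥ x) = A *ᵥ x := by rw [h1]
        rwa [mulVec_mulVec, hAB, zero_mulVec, eq_comm] at this
      simp [hS, add_mulVec, h1, h2, mulVecLin_apply]
  have hdim : Module.finrank ℂ (LinearMap.range A.mulVecLin ⊔ LinearMap.range B.mulVecLin :
      Submodule ℂ (Fin (2 * m) → ℂ)) = 2 * m := by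
    have := Submodule.finrank_sup_add_finrank_inf_eq
      (LinearMap.range A.mulVecLin) (LinearMap.range B.mulVecLin)
    rw [hinf, finrank_bot, add_zero] at this
    have hA' : Module.finrank ℂ (LinearMap.range A.mulVecLin) = m := hrA
    have hB' : Module.finrank ℂ (LinearMap.range B.mulVecLin) = m := hrB
    omega
  have htop : LinearMap.range S.mulVecLin = ⊤ := by
    rw [eq_top_iff]
    rw [← Submodule.eq_top_of_finrank_eq
      (S := LinearMap.range A.mulVecLin ⊔ LinearMap.range B.mulVecLin)
      (by rw [hdim]; simp [Module.finrank_pi, Fintype.card_fin])]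
    exact hsub
  -- S is idempotent
  have hSS : S * S = S := by
    simp only [hS, add_mul, mul_add, hA, hB, hAB, hBA, add_zero, zero_add]
  -- S = 1
  have hS1 : S = 1 := by
    have hfix : ∀ x, S *ᵥ x = x := by
      intro x
      obtain ⟨y, hy⟩ : x ∈ LinearMap.range S.mulVecLin := htop ▸ Submodule.mem_top
      rw [← hy]
      simp only [mulVecLin_apply, mulVec_mulVec, hSS]
    have : Matrix.toLin' S = Matrix.toLin' 1 := by
      apply LinearMap.ext
      intro x
      simp [Matrix.toLin'_apply, hfix]
    exact Matrix.toLin'.injective this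
  have : B = 1 - A := by rw [← hS1, hS]; exact (add_sub_cancel_left A B).symm
  exact this

theorem no_half_rank_PR_odd_cycle (ℓ m : ℕ) (hℓ : 1 < ℓ) (hodd : Odd ℓ)
    (hm : 1 ≤ m)
    (P : ZMod ℓ → Matrix (Fin (2 * m)) (Fin (2 * m)) ℂ)
    (hherm : ∀ j, (P j).IsHermitian) (hidem : ∀ j, P j * P j = P j)
    (hrank : ∀ j, (P j).rank = m)
    (horth : ∀ j, P j * P (j + 1) = 0) :
    False := by
  have key : ∀ j, P (j + 1) = 1 - P j := by
    intro j
    have hBA : P (j + 1) * P j = 0 := by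
      have := congrArg Matrix.conjTranspose (horth j)
      rwa [Matrix.conjTranspose_mul, (hherm j).eq, (hherm (j+1)).eq,
        Matrix.conjTranspose_zero] at this
    exact key_compl (P j) (P (j+1)) (hidem j) (hidem (j+1)) (hrank j) (hrank (j+1))
      (horth j) hBA
  have step : ∀ k : ℕ, P (k : ZMod ℓ) = if Even k then P 0 else 1 - P 0 := by
    intro k
    induction k with
    | zero => simp
    | succ n ih =>
      have : ((n + 1 : ℕ) : ZMod ℓ) = (n : ZMod ℓ) + 1 := by push_cast; ring
      rw [this, key, ih]
      by_cases h : Even n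
      · simp [h, Nat.even_add_one]
      · simp [h, Nat.even_add_one]
  have hfix := step ℓ
  rw [ZMod.natCast_self, if_neg (Nat.not_even_iff_odd.mpr hodd)] at hfix
  -- P 0 = 1 - P 0 → P 0 = 0
  have h0 : P 0 = 0 := by
    have h := hidem 0
    nth_rewrite 1 [hfix] at h
    rw [Matrix.sub_mul, Matrix.one_mul, hidem 0, sub_self] at h
    exact h.symm
  have := hrank 0
  rw [h0, Matrix.rank_zero] at this
  omega
end
end

section
/- Let G be a finite simple graph with fractional chromatic number χ_f(G) and clique number ω(G), and set κ = 2(χ_f(G) − ω(G)). Assume 0 < κ < 1, let r be a positive integer with r < 1/κ, and let k be a positive integer with k ≥ rχ_f(G)/(1 − rκ). Then for every rank-r projective representation (Π_x)_{x∈V(G∨C_{2k+1})} of the disjunctive product G∨C_{2k+1} in any dimension d, every weight function w : V(G∨C_{2k+1}) → ℝ≥0 satisfying Σ_{x∈I} w_x ≤ 1 for every independent set I of G∨C_{2k+1}, and every real η with Σ_x w_x Π_x ≥ η·𝟙 in the Loewner order, one has η ≤ 1. -/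
open scoped Classical ComplexOrder Kronecker
open scoped Matrix
noncomputable section

/-- The finset of all independent finsets of vertices of `G`. -/
def indepFinsets {α : Type*} [Fintype α] (G : SimpleGraph α) : Finset (Finset α) :=
  Finset.univ.filter fun I => IsIndep G ↑I

/-- A fractional coloring for weights `w`: a nonnegative value on each independent
set such that, for each vertex, the total value of the independent sets containing
it is at least its weight. -/
def IsFracColoring {α : Type*} [Fintype α] (G : SimpleGraph α) (w : α → ℝ)
    (z : Finset α → ℝ) : Prop :=
  (∀ I, 0 ≤ z I) ∧
    ∀ v, w v ≤ ∑ I ∈ (indepFinsets G).filter (fun I => v ∈ I), z I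

/-- The weighted fractional chromatic number. -/
def fracChromW {α : Type*} [Fintype α] (G : SimpleGraph α) (w : α → ℝ) : ℝ :=
  sInf {x | ∃ z : Finset α → ℝ, IsFracColoring G w z ∧ x = ∑ I ∈ indepFinsets G, z I}

/-- The (unweighted) fractional chromatic number. -/
def fracChrom {α : Type*} [Fintype α] (G : SimpleGraph α) : ℝ :=
  fracChromW G fun _ => 1

lemma zmod_cast_inj {n : ℕ} [NeZero n] {a b : ℕ} (ha : a < n) (hb : b < n)
    (h : (a : ZMod n) = b) : a = b := by
  have := congrArg ZMod.val h
  rwa [ZMod.val_cast_of_lt ha, ZMod.val_cast_of_lt hb] at this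

lemma cyc_indep (k : ℕ) (hk : 1 ≤ k) (j : ZMod (2*k+1)) :
    IsIndep (cycGraph (2*k+1)) ↑((Finset.range k).image (fun i => j + ((2*i : ℕ) : ZMod (2*k+1)))) := by
  intro x hx y hy hxy hadj
  simp only [Finset.coe_image, Set.mem_image, Finset.mem_coe, Finset.mem_range] at hx hy
  obtain ⟨i, hi, rfl⟩ := hx
  obtain ⟨i', hi', rfl⟩ := hy
  rcases hadj with ⟨hne, h1 | h2⟩
  · -- j + 2i' = j + 2i + 1
    have : ((2*i' : ℕ) : ZMod (2*k+1)) = ((2*i+1 : ℕ) : ZMod (2*k+1)) := by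
      push_cast at h1 ⊢
      have := add_left_cancel ((add_assoc j _ _) ▸ h1)
      push_cast
      linear_combination this
    have := zmod_cast_inj (by omega) (by omega) this
    omega
  · have : ((2*i : ℕ) : ZMod (2*k+1)) = ((2*i'+1 : ℕ) : ZMod (2*k+1)) := by
      push_cast at h2 ⊢
      have := add_left_cancel ((add_assoc j _ _) ▸ h2)
      push_cast
      linear_combination this
    have := zmod_cast_inj (by omega) (by omega) this
    omega

lemma cyc_count (k : ℕ) (hk : 1 ≤ k) (c : ZMod (2*k+1)) :
    (Finset.univ.filter (fun j : ZMod (2*k+1) =>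
      c ∈ (Finset.range k).image (fun i => j + ((2*i : ℕ) : ZMod (2*k+1))))).card = k := by
  have hset : Finset.univ.filter (fun j : ZMod (2*k+1) =>
      c ∈ (Finset.range k).image (fun i => j + ((2*i : ℕ) : ZMod (2*k+1))))
      = (Finset.range k).image (fun i => c - ((2*i : ℕ) : ZMod (2*k+1))) := by
    ext j
    simp only [Finset.mem_filter, Finset.mem_univ, true_and, Finset.mem_image,
      Finset.mem_range]
    constructor
    · rintro ⟨i, hi, hij⟩
      exact ⟨i, hi, by rw [← hij]; ring⟩
    · rintro ⟨i, hi, hij⟩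
      exact ⟨i, hi, by rw [← hij]; ring⟩
  rw [hset, Finset.card_image_of_injOn, Finset.card_range]
  intro i hi i' hi' h
  simp only [Finset.coe_range, Set.mem_Iio] at hi hi'
  have := zmod_cast_inj (a := 2*i) (b := 2*i') (by omega) (by omega) (sub_right_inj.mp h)
  omega

lemma prod_indep {α : Type*} [Fintype α] (G : SimpleGraph α) (k : ℕ) (hk : 1 ≤ k)
    (A : Finset α) (hA : IsIndep G ↑A) (J : Finset (ZMod (2*k+1)))
    (hJ : IsIndep (cycGraph (2*k+1)) ↑J) :
    IsIndep (disjProd G (cycGraph (2*k+1))) ↑(A ×ˢ J) := by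
  rintro ⟨a, c⟩ h1 ⟨b, c'⟩ h2 hne hadj
  simp only [Finset.coe_product, Set.mem_prod, Finset.mem_coe] at h1 h2
  rcases hadj with h | h
  · exact hA h1.1 h2.1 (G.ne_of_adj h) h
  · exact hJ h1.2 h2.2 h.1 h

lemma weight_bound {α : Type*} [Fintype α] (G : SimpleGraph α) (k : ℕ) (hk : 1 ≤ k)
    (w : α × ZMod (2*k+1) → ℝ) (hw0 : ∀ x, 0 ≤ w x)
    (hwI : ∀ I : Finset (α × ZMod (2*k+1)),
      IsIndep (disjProd G (cycGraph (2*k+1))) ↑I → ∑ x ∈ I, w x ≤ 1)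
    (z : Finset α → ℝ) (hz : IsFracColoring G (fun _ => 1) z) :
    (k:ℝ) * (∑ x, w x) ≤ (2*k+1:ℝ) * ∑ A ∈ indepFinsets G, z A := by
  classical
  set J : ZMod (2*k+1) → Finset (ZMod (2*k+1)) :=
    fun j => (Finset.range k).image (fun i => j + ((2*i : ℕ) : ZMod (2*k+1))) with hJdef
  set X : ℝ := ∑ A ∈ indepFinsets G, ∑ j : ZMod (2*k+1), z A * ∑ v ∈ A ×ˢ J j, w v with hX
  have claim2 : X ≤ (2*k+1:ℝ) * ∑ A ∈ indepFinsets G, z A := by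
    rw [hX, Finset.mul_sum]
    apply Finset.sum_le_sum
    intro A hA
    have hAind : IsIndep G ↑A := by
      simpa [indepFinsets] using hA
    have hterm : ∀ j : ZMod (2*k+1), z A * ∑ v ∈ A ×ˢ J j, w v ≤ z A * 1 := by
      intro j
      exact mul_le_mul_of_nonneg_left
        (hwI _ (prod_indep G k hk A hAind (J j) (cyc_indep k hk j))) (hz.1 A)
    calc ∑ j : ZMod (2*k+1), z A * ∑ v ∈ A ×ˢ J j, w v
        ≤ ∑ _j : ZMod (2*k+1), z A * 1 := Finset.sum_le_sum fun j _ => hterm j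
      _ = (2*k+1:ℝ) * z A := by
          rw [Finset.sum_const, Finset.card_univ, ZMod.card]
          push_cast
          ring
  have claim1 : (k:ℝ) * (∑ x, w x) ≤ X := by
    have hX2 : X = ∑ v : α × ZMod (2*k+1), ∑ A ∈ indepFinsets G, ∑ j : ZMod (2*k+1),
        (if v ∈ A ×ˢ J j then z A * w v else 0) := by
      rw [hX]
      have e1 : ∀ A ∈ indepFinsets G, ∑ j : ZMod (2*k+1), z A * ∑ v ∈ A ×ˢ J j, w v
          = ∑ v : α × ZMod (2*k+1), ∑ j : ZMod (2*k+1),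
            (if v ∈ A ×ˢ J j then z A * w v else 0) := by
        intro A _
        rw [Finset.sum_comm]
        apply Finset.sum_congr rfl
        intro j _
        rw [Finset.mul_sum, Finset.sum_ite_mem, Finset.univ_inter]
      rw [Finset.sum_congr rfl e1, Finset.sum_comm]
    rw [hX2, Finset.mul_sum]
    apply Finset.sum_le_sum
    rintro ⟨a, c⟩ _
    have step : ∀ A ∈ indepFinsets G, ∑ j : ZMod (2*k+1),
        (if (a, c) ∈ A ×ˢ J j then z A * w (a, c) else 0)
        = (if a ∈ A then z A else 0) * ((k : ℝ) * w (a, c)) := by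
      intro A _
      by_cases ha : a ∈ A
      · have e2 : ∀ j : ZMod (2*k+1), (if (a, c) ∈ A ×ˢ J j then z A * w (a,c) else 0)
            = (if c ∈ J j then (1:ℝ) else 0) * (z A * w (a,c)) := by
          intro j
          by_cases hc : c ∈ J j
          · rw [if_pos (Finset.mem_product.mpr ⟨ha, hc⟩), if_pos hc, one_mul]
          · rw [if_neg (fun h => hc (Finset.mem_product.mp h).2), if_neg hc, zero_mul]
        rw [Finset.sum_congr rfl (fun j _ => e2 j), ← Finset.sum_mul, Finset.sum_boole,
          cyc_count k hk c, if_pos ha]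
        ring
      · rw [if_neg ha, zero_mul]
        apply Finset.sum_eq_zero
        intro j _
        rw [if_neg (fun hmem => ha (Finset.mem_product.mp hmem).1)]
    rw [Finset.sum_congr rfl step, ← Finset.sum_mul]
    have hcov := hz.2 a
    rw [Finset.sum_filter] at hcov
    have hcov' : (1:ℝ) ≤ ∑ A ∈ indepFinsets G, (if a ∈ A then z A else 0) := hcov
    have hkw : (0:ℝ) ≤ (k:ℝ) * w (a, c) := mul_nonneg (by positivity) (hw0 (a, c))
    calc (k:ℝ) * w (a, c) = 1 * ((k:ℝ) * w (a, c)) := (one_mul _).symm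
      _ ≤ (∑ A ∈ indepFinsets G, (if a ∈ A then z A else 0)) * ((k:ℝ) * w (a, c)) :=
          mul_le_mul_of_nonneg_right hcov' hkw
  linarith

lemma herm_idem_trace_eq_rank {d : ℕ} {M : Matrix (Fin d) (Fin d) ℂ}
    (hh : M.IsHermitian) (hi : M * M = M) : M.trace = (M.rank : ℂ) := by
  have hev : ∀ i, hh.eigenvalues i = 0 ∨ hh.eigenvalues i = 1 := by
    intro i
    have hv := hh.mulVec_eigenvectorBasis i
    have h2 : (M * M) *ᵥ ⇑(hh.eigenvectorBasis i)
        = (hh.eigenvalues i * hh.eigenvalues i) • ⇑(hh.eigenvectorBasis i) := by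
      rw [← Matrix.mulVec_mulVec, hv, Matrix.mulVec_smul, hv, smul_smul]
    rw [hi, hv] at h2
    have hvne : ⇑(hh.eigenvectorBasis i) ≠ 0 := by
      have := hh.eigenvectorBasis.orthonormal.ne_zero i
      intro hc
      apply this
      ext j
      exact congrFun hc j
    have : (hh.eigenvalues i - hh.eigenvalues i * hh.eigenvalues i) • ⇑(hh.eigenvectorBasis i) = 0 := by
      rw [sub_smul, h2, sub_self]
    rcases smul_eq_zero.mp this with h | h
    · have : hh.eigenvalues i * (1 - hh.eigenvalues i) = 0 := by ring_nf; linarith [h]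
      rcases mul_eq_zero.mp this with h' | h'
      · exact Or.inl h'
      · exact Or.inr (by linarith)
    · exact absurd h hvne
  have htr : M.trace = ∑ i, (hh.eigenvalues i : ℂ) := by
    conv_lhs => rw [hh.spectral_theorem]
    rw [Unitary.conjStarAlgAut_apply, Matrix.trace_mul_comm, ← mul_assoc, Unitary.coe_star_mul_self, one_mul,
      Matrix.trace_diagonal]
    rfl
  have hrk : M.rank = Fintype.card {i // hh.eigenvalues i ≠ 0} := hh.rank_eq_card_non_zero_eigs
  rw [htr, hrk, Fintype.card_subtype]
  push_cast
  rw [Finset.card_filter]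
  push_cast
  apply Finset.sum_congr rfl
  intro i _
  rcases hev i with h | h <;> simp [h]

lemma herm_idem_trace_nonneg {d : ℕ} {M : Matrix (Fin d) (Fin d) ℂ}
    (hh : M.IsHermitian) (hi : M * M = M) : (0:ℂ) ≤ M.trace := by
  rw [herm_idem_trace_eq_rank hh hi]
  have : ((M.rank : ℝ) : ℂ) = (M.rank : ℂ) := by push_cast; ring
  rw [← this]
  exact Complex.zero_le_real.mpr (by positivity)

lemma herm_idem_eq_zero_of_trace {d : ℕ} {M : Matrix (Fin d) (Fin d) ℂ}
    (hh : M.IsHermitian) (hi : M * M = M) (ht : M.trace = 0) : M = 0 := by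
  -- M = Mᴴ * M, trace zero forces entries zero
  have hM : Mᴴ * M = M := by rw [hh.eq]; exact hi
  have ht' : Matrix.trace (Mᴴ * M) = 0 := by rw [hM]; exact ht
  have hexp : Matrix.trace (Mᴴ * M) = ∑ i, ∑ j, star (M j i) * M j i := by
    simp [Matrix.trace, Matrix.diag, Matrix.mul_apply, Matrix.conjTranspose_apply]
  rw [hexp] at ht'
  have hnn : ∀ i ∈ (Finset.univ : Finset (Fin d)), (0:ℂ) ≤ ∑ j, star (M j i) * M j i :=
    fun i _ => Finset.sum_nonneg fun j _ => star_mul_self_nonneg _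
  have hz := (Finset.sum_eq_zero_iff_of_nonneg hnn).mp ht'
  ext i j
  have hzj := (Finset.sum_eq_zero_iff_of_nonneg
    (fun l _ => star_mul_self_nonneg (M l j))).mp (hz j (Finset.mem_univ j)) i (Finset.mem_univ i)
  have h0 : ((Complex.normSq (M i j) : ℝ) : ℂ) = 0 := by
    rw [Complex.normSq_eq_conj_mul_self]
    simpa [Complex.star_def] using hzj
  exact Complex.normSq_eq_zero.mp (by exact_mod_cast h0)

lemma psd_trace_nonneg {d : ℕ} {M : Matrix (Fin d) (Fin d) ℂ}
    (h : M.PosSemidef) : (0:ℂ) ≤ M.trace := by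
  have hdiag : ∀ i, (0:ℂ) ≤ M i i := by
    intro i
    exact h.diag_nonneg
  exact Finset.sum_nonneg fun i _ => hdiag i

theorem no_low_rank_SIC {α : Type*} [Fintype α] (G : SimpleGraph α)
    (κ : ℝ) (hκdef : κ = 2 * (fracChrom G - (G.cliqueNum : ℝ)))
    (hκ0 : 0 < κ) (hκ1 : κ < 1)
    (r : ℕ) (hr : 1 ≤ r) (hrκ : (r : ℝ) < 1 / κ)
    (k : ℕ) (hk : 1 ≤ k) (hkge : (r : ℝ) * fracChrom G / (1 - (r : ℝ) * κ) ≤ (k : ℝ))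
    (d : ℕ)
    (P : α × ZMod (2 * k + 1) → Matrix (Fin d) (Fin d) ℂ)
    (hherm : ∀ x, (P x).IsHermitian) (hidem : ∀ x, P x * P x = P x)
    (hrank : ∀ x, (P x).rank = r)
    (horth : ∀ x y, (disjProd G (cycGraph (2 * k + 1))).Adj x y → P x * P y = 0)
    (w : α × ZMod (2 * k + 1) → ℝ) (hw0 : ∀ x, 0 ≤ w x)
    (hwI : ∀ I : Finset (α × ZMod (2 * k + 1)),
      IsIndep (disjProd G (cycGraph (2 * k + 1))) ↑I → ∑ x ∈ I, w x ≤ 1)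
    (η : ℝ)
    (hη : Matrix.PosSemidef (∑ x, (w x : ℂ) • P x - (η : ℂ) • 1)) :
    η ≤ 1 := by
  -- basic numeric facts
  have hkR : (1:ℝ) ≤ (k:ℝ) := by exact_mod_cast hk
  have hrR : (1:ℝ) ≤ (r:ℝ) := by exact_mod_cast hr
  set χ : ℝ := fracChrom G with hχdef
  set ω : ℕ := G.cliqueNum with hωdef
  -- the feasible set for the fractional chromatic LP of G
  set S : Set ℝ := {x | ∃ z : Finset α → ℝ, IsFracColoring G (fun _ => 1) z ∧
    x = ∑ I ∈ indepFinsets G, z I} with hSdef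
  have hSbdd : BddBelow S := by
    refine ⟨0, fun x hx => ?_⟩
    obtain ⟨z, hz, rfl⟩ := hx
    exact Finset.sum_nonneg fun I _ => hz.1 I
  have hχS : χ = sInf S := rfl
  -- α is nonempty
  have hαne : Nonempty α := by
    by_contra hcon
    have hempty : IsEmpty α := not_nonempty_iff.mp hcon
    have h1 : χ ≤ 0 := by
      rw [hχS]
      apply csInf_le hSbdd
      exact ⟨fun _ => 0, ⟨fun I => le_refl 0, fun v => (hempty.false v).elim⟩, by simp⟩
    have h2 : (0:ℝ) ≤ (ω : ℝ) := Nat.cast_nonneg _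
    rw [hκdef] at hκ0
    linarith
  -- the LP feasible set is nonempty
  have hSne : S.Nonempty := by
    refine ⟨_, ⟨fun _ => 1, ⟨fun I => zero_le_one, fun v => ?_⟩, rfl⟩⟩
    have hmem : ({v} : Finset α) ∈ (indepFinsets G).filter (fun I => v ∈ I) := by
      simp only [Finset.mem_filter, Finset.mem_singleton, and_true, indepFinsets,
        Finset.mem_univ, true_and]
      intro x hx y hy hxy
      simp only [Finset.coe_singleton, Set.mem_singleton_iff] at hx hy
      exact absurd (hx.trans hy.symm) hxy
    have hpos : 0 < ((indepFinsets G).filter (fun I => v ∈ I)).card := Finset.card_pos.mpr ⟨_, hmem⟩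
    show (1:ℝ) ≤ _
    rw [Finset.sum_const, nsmul_eq_mul, mul_one]
    exact Nat.one_le_cast.mpr hpos
  -- step 1: η * d ≤ r * W
  set W : ℝ := ∑ x, w x with hWdef
  have htrx : ∀ x, (P x).trace = (r:ℂ) := fun x => by
    rw [herm_idem_trace_eq_rank (hherm x) (hidem x), hrank x]
  have step1 : η * d ≤ r * W := by
    have h1 := psd_trace_nonneg hη
    have e1 : (∑ x, (w x:ℂ) • P x - (η:ℂ) • (1 : Matrix (Fin d) (Fin d) ℂ)).trace
        = ((r * W - η * d : ℝ) : ℂ) := by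
      rw [Matrix.trace_sub, Matrix.trace_sum]
      simp only [Matrix.trace_smul, htrx, Matrix.trace_one, smul_eq_mul, Fintype.card_fin]
      rw [hWdef]
      push_cast
      rw [Finset.mul_sum]
      exact sub_left_inj.mpr (Finset.sum_congr rfl fun x _ => mul_comm _ _)
    rw [e1] at h1
    have := Complex.zero_le_real.mp h1
    linarith
  -- step 2: k * W ≤ (2k+1) * χ
  have step2 : (k:ℝ) * W ≤ (2*k+1 : ℝ) * χ := by
    by_contra hcon
    push_neg at hcon
    have hnpos : (0:ℝ) < 2*(k:ℝ)+1 := by linarith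
    set ε : ℝ := ((k:ℝ) * W - (2*k+1:ℝ) * χ) / (2*(k:ℝ)+1) with hεdef
    have hεpos : 0 < ε := div_pos (by linarith) hnpos
    obtain ⟨x, hxS, hxlt⟩ := Real.lt_sInf_add_pos hSne hεpos
    obtain ⟨z, hz, rfl⟩ := hxS
    have hb := weight_bound G k hk w hw0 hwI z hz
    rw [← hχS] at hxlt
    have hstrict : (k:ℝ) * W < (2*k+1:ℝ) * (χ + ε) := by
      calc (k:ℝ) * W ≤ (2*k+1:ℝ) * ∑ I ∈ indepFinsets G, z I := by push_cast at hb ⊢; linarith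
        _ < (2*k+1:ℝ) * (χ + ε) := by
            apply mul_lt_mul_of_pos_left hxlt (by push_cast; linarith)
    have hε2 : (2*(k:ℝ)+1) * ε = (k:ℝ)*W - (2*(k:ℝ)+1)*χ := by
      rw [hεdef]
      field_simp
    push_cast at hstrict
    nlinarith [hstrict, hε2]
  -- ZMod facts
  have hne01 : (0 : ZMod (2*k+1)) ≠ (1 : ZMod (2*k+1)) := by
    intro h
    have h' : ((0:ℕ) : ZMod (2*k+1)) = ((1:ℕ) : ZMod (2*k+1)) := by push_cast; exact h
    have := zmod_cast_inj (n := 2*k+1) (by omega) (by omega) h'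
    omega
  have hadj_succ : ∀ c : ZMod (2*k+1), (cycGraph (2*k+1)).Adj c (c+1) := by
    intro c
    refine ⟨fun h => hne01 (add_left_cancel (a := c) (by rw [add_zero]; exact h)), Or.inl rfl⟩
  have hadj01 : (cycGraph (2*k+1)).Adj 0 1 := by
    simpa using hadj_succ 0
  -- maximum clique of G
  obtain ⟨K, hKclique, hKcard⟩ := G.exists_isNClique_cliqueNum
  have hω1 : 1 ≤ ω := by
    obtain ⟨a⟩ := hαne
    have hcl : G.IsClique ({a} : Finset α) := by
      intro x hx y hy hxy
      simp only [Finset.coe_singleton, Set.mem_singleton_iff] at hx hy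
      exact absurd (hx.trans hy.symm) hxy
    have h1 := SimpleGraph.IsClique.card_le_cliqueNum (tc := hcl)
    simpa using h1
  set Q : Finset (α × ZMod (2*k+1)) := K ×ˢ ({0, 1} : Finset (ZMod (2*k+1))) with hQdef
  have horthQ : ∀ q ∈ Q, ∀ q' ∈ Q, q ≠ q' → P q * P q' = 0 := by
    rintro ⟨b, i⟩ hq ⟨b', i'⟩ hq' hne
    rw [hQdef, Finset.mem_product] at hq hq'
    apply horth
    by_cases hbb : b = b'
    · subst hbb
      have hii : i ≠ i' := fun h => hne (by rw [h])
      have hi := hq.2; have hi' := hq'.2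
      simp only [Finset.mem_insert, Finset.mem_singleton] at hi hi'
      rcases hi with rfl | rfl <;> rcases hi' with rfl | rfl
      · exact absurd rfl hii
      · exact Or.inr hadj01
      · exact Or.inr hadj01.symm
      · exact absurd rfl hii
    · exact Or.inl (hKclique (Finset.mem_coe.mpr hq.1) (Finset.mem_coe.mpr hq'.1) hbb)
  set F : Matrix (Fin d) (Fin d) ℂ := ∑ q ∈ Q, P q with hFdef
  have hFherm : F.IsHermitian := by
    show Fᴴ = F
    rw [hFdef, Matrix.conjTranspose_sum]
    exact Finset.sum_congr rfl fun q _ => (hherm q).eq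
  have hFidem : F * F = F := by
    rw [hFdef, Finset.sum_mul_sum]
    refine Finset.sum_congr rfl fun q hq => ?_
    rw [Finset.sum_eq_single_of_mem q hq (fun q' hq' hne => horthQ q hq q' hq' hne.symm), hidem]
  have hQcard : Q.card = ω * 2 := by
    rw [hQdef, Finset.card_product, hKcard, Finset.card_pair hne01]
  have htrF : F.trace = ((2 * ω * r : ℕ) : ℂ) := by
    rw [hFdef, Matrix.trace_sum, Finset.sum_congr rfl (fun q _ => htrx q), Finset.sum_const,
      hQcard]
    push_cast
    ring
  have hG1herm : (1 - F).IsHermitian := Matrix.isHermitian_one.sub hFherm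
  have hG1idem : (1 - F) * (1 - F) = 1 - F := by
    rw [sub_mul, one_mul, mul_sub, mul_one, hFidem, sub_self, sub_zero]
  have htrG1 : (1 - F).trace = ((((d:ℝ) - ((2 * ω * r : ℕ) : ℝ)) : ℝ) : ℂ) := by
    rw [Matrix.trace_sub, Matrix.trace_one, htrF]
    push_cast [Fintype.card_fin]
    ring
  have h2ωr_le_d : (2 * ω * r : ℕ) ≤ d := by
    have h0 := herm_idem_trace_nonneg hG1herm hG1idem
    rw [htrG1] at h0
    have h1 : (0:ℝ) ≤ (d:ℝ) - ((2 * ω * r : ℕ) : ℝ) := Complex.zero_le_real.mp h0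
    have : ((2 * ω * r : ℕ) : ℝ) ≤ (d : ℝ) := by linarith
    exact_mod_cast this
  rcases eq_or_lt_of_le h2ωr_le_d with heq | hlt
  · -- tight case : contradiction with the odd cycle
    exfalso
    have hF1 : F = 1 := by
      have h0 : (1 - F).trace = 0 := by
        rw [htrG1, ← heq]
        norm_num
      have hz := herm_idem_eq_zero_of_trace hG1herm hG1idem h0
      have := sub_eq_zero.mp hz
      exact this.symm
    have hKne : K.Nonempty := Finset.card_pos.mp (by rw [hKcard]; exact hω1)
    obtain ⟨a, haK⟩ := hKne
    set E : Matrix (Fin d) (Fin d) ℂ := P (a, 0) + P (a, 1) with hEdef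
    have hPE : ∀ c : ZMod (2*k+1), P (a,c) * E = P (a,c) ∧ E * P (a,c) = P (a,c) := by
      intro c
      have hoff : ∀ b ∈ K, b ≠ a → ∀ i : ZMod (2*k+1), P (b, i) * P (a, c) = 0 ∧
          P (a, c) * P (b, i) = 0 := by
        intro b hb hba i
        have hadj : G.Adj b a := hKclique (Finset.mem_coe.mpr hb) (Finset.mem_coe.mpr haK) hba
        exact ⟨horth _ _ (Or.inl hadj), horth _ _ (Or.inl hadj.symm)⟩
      constructor
      · have h1 : P (a,c) * F = P (a,c) := by rw [hF1, mul_one]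
        rw [hFdef, Finset.mul_sum, hQdef, Finset.sum_product] at h1
        rw [Finset.sum_eq_single_of_mem a haK
          (fun b hb hba => Finset.sum_eq_zero fun i _ => (hoff b hb hba i).2)] at h1
        rw [Finset.sum_pair (hne01 : (0 : ZMod (2*k+1)) ≠ 1), ← mul_add] at h1
        exact h1
      · have h1 : F * P (a,c) = P (a,c) := by rw [hF1, one_mul]
        rw [hFdef, Finset.sum_mul, hQdef, Finset.sum_product] at h1
        rw [Finset.sum_eq_single_of_mem a haK
          (fun b hb hba => Finset.sum_eq_zero fun i _ => (hoff b hb hba i).1)] at h1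
        rw [Finset.sum_pair (hne01 : (0 : ZMod (2*k+1)) ≠ 1), ← add_mul] at h1
        exact h1
    have hEherm : E.IsHermitian := (hherm _).add (hherm _)
    have hEidem : E * E = E := by
      rw [hEdef, add_mul, mul_add, mul_add, hidem, hidem,
        horth (a,0) (a,1) (Or.inr hadj01), horth (a,1) (a,0) (Or.inr hadj01.symm)]
      abel
    have hstep : ∀ c : ZMod (2*k+1), P (a, c+1) = E - P (a, c) := by
      intro c
      have hadj := hadj_succ c
      have hAB : P (a,c+1) * P (a,c) = 0 := horth _ _ (Or.inr hadj.symm)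
      have hBA : P (a,c) * P (a,c+1) = 0 := horth _ _ (Or.inr hadj)
      have hBherm : (E - P (a,c)).IsHermitian := hEherm.sub (hherm _)
      have hBidem : (E - P (a,c)) * (E - P (a,c)) = E - P (a,c) := by
        have expand : (E - P (a,c)) * (E - P (a,c))
            = E * E - E * P (a,c) - P (a,c) * E + P (a,c) * P (a,c) := by noncomm_ring
        rw [expand, hEidem, (hPE c).2, (hPE c).1, hidem]
        abel
      have hABeq : P (a,c+1) * (E - P (a,c)) = P (a,c+1) := by
        rw [mul_sub, (hPE (c+1)).1, hAB, sub_zero]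
      have hBAeq : (E - P (a,c)) * P (a,c+1) = P (a,c+1) := by
        rw [sub_mul, (hPE (c+1)).2, hBA, sub_zero]
      have hCherm : ((E - P (a,c)) - P (a,c+1)).IsHermitian := hBherm.sub (hherm _)
      have hCidem : ((E - P (a,c)) - P (a,c+1)) * ((E - P (a,c)) - P (a,c+1))
          = (E - P (a,c)) - P (a,c+1) := by
        have expand : ∀ B A : Matrix (Fin d) (Fin d) ℂ, (B - A) * (B - A)
            = B * B - B * A - A * B + A * A := by intro B A; noncomm_ring
        rw [expand, hBidem, hABeq, hBAeq, hidem]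
        abel
      have hCtr : ((E - P (a,c)) - P (a,c+1)).trace = 0 := by
        rw [Matrix.trace_sub, Matrix.trace_sub, hEdef, Matrix.trace_add, htrx, htrx, htrx, htrx]
        ring
      have hz := herm_idem_eq_zero_of_trace hCherm hCidem hCtr
      exact (sub_eq_zero.mp hz).symm
    have heven : ∀ i : ℕ, i ≤ k → P (a, ((2*i : ℕ) : ZMod (2*k+1))) = P (a, 0) := by
      intro i
      induction i with
      | zero =>
        intro _
        have e0 : ((2*0 : ℕ) : ZMod (2*k+1)) = 0 := by norm_num
        rw [e0]
      | succ m ih =>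
        intro hm
        have e : ((2*(m+1) : ℕ) : ZMod (2*k+1)) = ((2*m : ℕ) : ZMod (2*k+1)) + 1 + 1 := by
          push_cast; ring
        rw [e, hstep, hstep, sub_sub_cancel, ih (by omega)]
    have hfin := heven k le_rfl
    have h2k0 : (cycGraph (2*k+1)).Adj ((2*k : ℕ) : ZMod (2*k+1)) 0 := by
      have hself : ((2*k+1 : ℕ) : ZMod (2*k+1)) = 0 := ZMod.natCast_self _
      constructor
      · intro hzero
        have h' : ((2*k:ℕ) : ZMod (2*k+1)) = ((0:ℕ) : ZMod (2*k+1)) := by push_cast at hzero ⊢; exact hzero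
        have := zmod_cast_inj (n := 2*k+1) (by omega) (by omega) h'
        omega
      · left
        push_cast at hself ⊢
        linear_combination -hself
    have hzero : P (a, 0) * P (a, 0) = 0 := by
      have := horth _ _ (Or.inr h2k0 :
        (disjProd G (cycGraph (2*k+1))).Adj (a, ((2*k : ℕ) : ZMod (2*k+1))) (a, 0))
      rwa [hfin] at this
    rw [hidem] at hzero
    have hr0 : (P (a,0)).rank = 0 := by rw [hzero]; exact Matrix.rank_zero
    rw [hrank] at hr0
    omega
  · -- non-tight case : arithmetic
    have hκpos : (0:ℝ) < 1 - (r:ℝ) * κ := by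
      have h1 : (r:ℝ) * κ < (1/κ) * κ := mul_lt_mul_of_pos_right hrκ hκ0
      rw [one_div_mul_cancel (ne_of_gt hκ0)] at h1
      linarith
    have hineq : (r:ℝ) * χ ≤ (k:ℝ) * (1 - (r:ℝ) * κ) := (div_le_iff₀ hκpos).mp hkge
    subst hκdef
    have key : (r:ℝ) * (2*(k:ℝ)+1) * χ ≤ (k:ℝ) * (2*(r:ℝ)*(ω:ℝ) + 1) := by nlinarith [hineq]
    have hd1 : (2*ω*r + 1 : ℕ) ≤ d := hlt
    have hdR : 2*(ω:ℝ)*(r:ℝ) + 1 ≤ (d:ℝ) := by exact_mod_cast hd1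
    have hωnn : (0:ℝ) ≤ (ω:ℝ)*(r:ℝ) := by positivity
    have hdpos : (0:ℝ) < (d:ℝ) := by linarith
    have hkpos : (0:ℝ) < (k:ℝ) := by linarith
    have c1 : (k:ℝ) * (η * d) ≤ (k:ℝ) * ((r:ℝ) * W) :=
      mul_le_mul_of_nonneg_left step1 (le_of_lt hkpos)
    have c2 : (r:ℝ) * ((k:ℝ)*W) ≤ (r:ℝ) * ((2*(k:ℝ)+1)*χ) := by
      apply mul_le_mul_of_nonneg_left _ (by linarith)
      push_cast at step2 ⊢
      linarith
    have c3 : (k:ℝ) * (2*(ω:ℝ)*(r:ℝ) + 1) ≤ (k:ℝ) * (d:ℝ) :=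
      mul_le_mul_of_nonneg_left hdR (le_of_lt hkpos)
    have hkd : (0:ℝ) < (k:ℝ) * (d:ℝ) := mul_pos hkpos hdpos
    have main : η * ((k:ℝ)*(d:ℝ)) ≤ 1 * ((k:ℝ)*(d:ℝ)) := by
      linarith only [c1, c2, c3, key]
    exact le_of_mul_le_mul_right (by linarith only [main]) hkd
end
end

section
/- Let r ≥ 2 and for each j ∈ ZMod(3r−1) define the diagonal (3r−1)×(3r−1) complex matrix Π_j = Σ_{t=0}^{r−1} |j⊕t⟩⟨j⊕t|, where ⊕ denotes addition modulo 3r−1 and |m⟩⟨m| is the diagonal matrix with a single 1 in position (m,m). Then each Π_j is an orthogonal projection of rank r, Π_j·Π_{j'} = 0 whenever j and j' are adjacent in AR(r) (so (Π_j) is a rank-r projective representation of AR(r) in dimension 3r−1), and Σ_{j∈ZMod(3r−1)} Π_j = r·𝟙. -/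
open scoped Classical ComplexOrder Kronecker
noncomputable section

/-- The circulant graph `AR r` on `ZMod (3r-1)`: `j` and `k` are adjacent iff
`j - k ≡ ±s (mod 3r-1)` for some `s ∈ {r, …, 2r-1}`. -/
def AR (r : ℕ) : SimpleGraph (ZMod (3 * r - 1)) where
  Adj j k := j ≠ k ∧ ∃ s : ℕ, r ≤ s ∧ s ≤ 2 * r - 1 ∧
    (j - k = (s : ZMod (3 * r - 1)) ∨ k - j = (s : ZMod (3 * r - 1)))
  symm := by
    constructor
    rintro j k ⟨h1, s, hs1, hs2, h3⟩
    exact ⟨h1.symm, s, hs1, hs2, h3.symm⟩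
  loopless := by constructor; rintro j ⟨h1, -⟩; exact h1 rfl

theorem AR_rank_r_PR (r : ℕ) (hr : 2 ≤ r) [NeZero (3 * r - 1)]
    (P : ZMod (3 * r - 1) → Matrix (ZMod (3 * r - 1)) (ZMod (3 * r - 1)) ℂ)
    (hdef : ∀ j, P j = ∑ t ∈ Finset.range r,
      Matrix.single (j + (t : ZMod (3 * r - 1)))
        (j + (t : ZMod (3 * r - 1))) (1 : ℂ)) :
    (∀ j, (P j).IsHermitian) ∧ (∀ j, P j * P j = P j) ∧
    (∀ j, (P j).rank = r) ∧
    (∀ j j', (AR r).Adj j j' → P j * P j' = 0) ∧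
    ∑ j, P j = (r : ℂ) • (1 : Matrix (ZMod (3 * r - 1)) (ZMod (3 * r - 1)) ℂ) := by
  have hrn : r < 3 * r - 1 := by omega
  have hcast : ∀ a b : ℕ, a < 3 * r - 1 → b < 3 * r - 1 → (a : ZMod (3 * r - 1)) = (b : ZMod (3 * r - 1)) → a = b := by
    intro a b ha hb h
    rw [← ZMod.val_cast_of_lt ha, ← ZMod.val_cast_of_lt hb, h]
  have hvr : ∀ m : ZMod (3 * r - 1), ((m.val : ℕ) : ZMod (3 * r - 1)) = m := fun m =>
    ZMod.natCast_rightInverse m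
  have hvlt : ∀ m : ZMod (3 * r - 1), m.val < 3 * r - 1 := fun m => ZMod.val_lt m
  -- the diagonal description
  set d : ZMod (3 * r - 1) → ZMod (3 * r - 1) → ℂ := fun j m => if (m - j).val < r then 1 else 0 with hd
  have key : ∀ (j m : ZMod (3 * r - 1)) (t : ℕ), t ∈ Finset.range r →
      (j + (t : ZMod (3 * r - 1)) = m ↔ t = (m - j).val) := by
    intro j m t ht
    rw [Finset.mem_range] at ht
    constructor
    · intro h
      have : (t : ZMod (3 * r - 1)) = m - j := by rw [← h]; ring
      rw [← ZMod.val_cast_of_lt (lt_trans ht hrn), this]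
    · intro h
      have : (t : ZMod (3 * r - 1)) = m - j := by rw [h, hvr]
      rw [this]; ring
  have hP : ∀ j, P j = Matrix.diagonal (d j) := by
    intro j
    rw [hdef]
    ext a b
    rw [Matrix.sum_apply]
    by_cases hab : a = b
    · subst hab
      simp only [Matrix.single, Matrix.of_apply, and_self]
      rw [Finset.sum_congr rfl (fun t ht => by
        rw [if_congr (key j a t ht) rfl rfl])]
      rw [Finset.sum_ite_eq' (Finset.range r) ((a - j).val) (fun _ => (1:ℂ))]
      simp [hd, Matrix.diagonal_apply_eq]
    · have : ∀ t ∈ Finset.range r,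
          Matrix.single (j + (t : ZMod (3 * r - 1))) (j + (t : ZMod (3 * r - 1))) (1:ℂ) a b = 0 := by
        intro t ht
        simp only [Matrix.single, Matrix.of_apply]
        rw [if_neg]
        rintro ⟨h1, h2⟩
        exact hab (h1.symm.trans h2)
      rw [Finset.sum_congr rfl this, Finset.sum_const_zero,
        Matrix.diagonal_apply_ne _ hab]
  -- counting lemma
  have hbase : (Finset.univ.filter (fun x : ZMod (3 * r - 1) => x.val < r)).card = r := by
    have himg : Finset.univ.filter (fun x : ZMod (3 * r - 1) => x.val < r) =
        (Finset.range r).image (fun t : ℕ => (t : ZMod (3 * r - 1))) := by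
      ext x
      simp only [Finset.mem_filter, Finset.mem_univ, true_and, Finset.mem_image,
        Finset.mem_range]
      constructor
      · intro hx; exact ⟨x.val, hx, hvr x⟩
      · rintro ⟨t, ht, rfl⟩; rw [ZMod.val_cast_of_lt (lt_trans ht hrn)]; exact ht
    rw [himg, Finset.card_image_of_injOn, Finset.card_range]
    intro a ha b hb hab
    rw [Finset.coe_range, Set.mem_Iio] at ha hb
    exact hcast a b (lt_trans ha hrn) (lt_trans hb hrn) hab
  have hcount : ∀ j : ZMod (3 * r - 1),
      (Finset.univ.filter (fun m : ZMod (3 * r - 1) => (m - j).val < r)).card = r := by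
    intro j
    have hc : (Finset.univ.filter (fun m : ZMod (3 * r - 1) => (m - j).val < r)).card =
        (Finset.univ.filter (fun x : ZMod (3 * r - 1) => x.val < r)).card := by
      apply Finset.card_bij (fun m _ => m - j)
      · intro m hm
        simp only [Finset.mem_filter, Finset.mem_univ, true_and] at hm ⊢
        exact hm
      · intro a ha b hb hab
        exact sub_left_injective.eq_iff.mp hab
      · intro x hx
        refine ⟨x + j, ?_, by ring⟩
        simp only [Finset.mem_filter, Finset.mem_univ, true_and, add_sub_cancel_right] at hx ⊢
        exact hx
    rw [hc, hbase]
  have hcount2 : ∀ m : ZMod (3 * r - 1),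
      (Finset.univ.filter (fun j : ZMod (3 * r - 1) => (m - j).val < r)).card = r := by
    intro m
    have hc : (Finset.univ.filter (fun j : ZMod (3 * r - 1) => (m - j).val < r)).card =
        (Finset.univ.filter (fun x : ZMod (3 * r - 1) => x.val < r)).card := by
      apply Finset.card_bij (fun j _ => m - j)
      · intro j hj
        simp only [Finset.mem_filter, Finset.mem_univ, true_and] at hj ⊢
        exact hj
      · intro a ha b hb hab
        have : m - (m - a) = m - (m - b) := by rw [hab]
        simpa using this
      · intro x hx
        refine ⟨m - x, ?_, by ring⟩
        simp only [Finset.mem_filter, Finset.mem_univ, true_and, sub_sub_cancel] at hx ⊢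
        exact hx
    rw [hc, hbase]
  refine ⟨?_, ?_, ?_, ?_, ?_⟩
  · -- Hermitian
    intro j
    have hstar : star (d j) = d j := by
      funext m
      simp only [hd, Pi.star_apply]
      by_cases h : (m - j).val < r <;> simp [h]
    rw [hP j, Matrix.IsHermitian, Matrix.diagonal_conjTranspose, hstar]
  · -- idempotent
    intro j
    have hm : (fun i => d j i * d j i) = d j := by
      funext m
      simp only [hd]
      by_cases h : (m - j).val < r <;> simp [h]
    rw [hP j, Matrix.diagonal_mul_diagonal, hm]
  · -- rank
    intro j
    rw [hP j, Matrix.rank_diagonal, Fintype.card_subtype]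
    have hf : Finset.univ.filter (fun x => d j x ≠ 0) =
        Finset.univ.filter (fun m : ZMod (3 * r - 1) => (m - j).val < r) := by
      apply Finset.filter_congr
      intro m _
      by_cases h : (m - j).val < r <;> simp [hd, h]
    rw [hf, hcount j]
  · -- adjacency orthogonality
    intro j j' hadj
    obtain ⟨hne, s, hs1, hs2, hs3⟩ := hadj
    rw [hP j, hP j', Matrix.diagonal_mul_diagonal]
    have : ∀ m : ZMod (3 * r - 1), d j m * d j' m = 0 := by
      intro m
      simp only [hd]
      by_cases h1 : (m - j).val < r
      · by_cases h2 : (m - j').val < r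
        · exfalso
          set u := (m - j).val with hu
          set u' := (m - j').val with hu'
          have hjj' : j - j' = (u' : ZMod (3 * r - 1)) - (u : ZMod (3 * r - 1)) := by
            rw [hu, hu', hvr, hvr]; ring
          cases hs3 with
          | inl h =>
            -- j - j' = s, so s + u = u' mod n
            have : ((s + u : ℕ) : ZMod (3 * r - 1)) = ((u' : ℕ) : ZMod (3 * r - 1)) := by
              push_cast
              rw [← h, hjj']; ring
            have heq : s + u = u' := hcast _ _ (by omega) (by omega) this
            omega
          | inr h =>
            have hjj'2 : j' - j = (u : ZMod (3 * r - 1)) - (u' : ZMod (3 * r - 1)) := by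
              rw [hu, hu', hvr, hvr]; ring
            have : ((s + u' : ℕ) : ZMod (3 * r - 1)) = ((u : ℕ) : ZMod (3 * r - 1)) := by
              push_cast
              rw [← h, hjj'2]; ring
            have heq : s + u' = u := hcast _ _ (by omega) (by omega) this
            omega
        · simp [h2]
      · simp [h1]
    rw [show (fun m => d j m * d j' m) = fun _ => (0:ℂ) from funext this]
    exact Matrix.diagonal_zero
  · -- sum
    ext a b
    rw [Matrix.sum_apply]
    by_cases hab : a = b
    · subst hab
      have : ∀ j : ZMod (3 * r - 1), P j a a = d j a := by
        intro j; rw [hP j, Matrix.diagonal_apply_eq]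
      rw [Finset.sum_congr rfl (fun j _ => this j)]
      simp only [hd]
      rw [Finset.sum_boole, hcount2 a]
      simp [Matrix.one_apply]
    · have : ∀ j : ZMod (3 * r - 1), P j a b = 0 := by
        intro j; rw [hP j, Matrix.diagonal_apply_ne _ hab]
      rw [Finset.sum_congr rfl (fun j _ => this j), Finset.sum_const_zero]
      simp [Matrix.one_apply, hab]
end
end

section
/- For every integer r ≥ 2, the independence number of AR(r) equals r: the set {0, 1, …, r−1} ⊆ ZMod(3r−1) is an independent set of AR(r), and every independent set of AR(r) has cardinality at most r. -/
open scoped Classical ComplexOrder Kronecker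
noncomputable section

lemma AR_adj_iff {r : ℕ} (hr : 2 ≤ r) (x y : ZMod (3 * r - 1)) :
    (AR r).Adj x y ↔ x ≠ y ∧ r ≤ (x - y).val ∧ (x - y).val ≤ 2 * r - 1 := by
  haveI : NeZero (3 * r - 1) := ⟨by omega⟩
  constructor
  · rintro ⟨hne, s, hs1, hs2, h | h⟩
    · have hv : (x - y).val = s := by
        rw [h, ZMod.val_cast_of_lt (by omega)]
      exact ⟨hne, by omega, by omega⟩
    · have hyx : y - x ≠ 0 := sub_ne_zero.mpr (Ne.symm hne)
      have hv : (y - x).val = s := by rw [h, ZMod.val_cast_of_lt (by omega)]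
      have hneg : x - y = -(y - x) := by ring
      have hv2 : (x - y).val = (3 * r - 1) - s := by
        rw [hneg, ZMod.neg_val, if_neg hyx, hv]
      exact ⟨hne, by omega, by omega⟩
  · rintro ⟨hne, h1, h2⟩
    exact ⟨hne, (x - y).val, h1, h2, Or.inl (ZMod.natCast_rightInverse _).symm⟩

lemma kbound (n k : ℤ) (hn : 0 < n) (h1 : -2 * n < n * k) (h2 : n * k < n) :
    k = 0 ∨ k = -1 := by
  have hk1 : k < 1 := by
    by_contra h
    push_neg at h
    nlinarith
  have hk2 : -2 < k := by
    by_contra h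
    push_neg at h
    nlinarith
  omega

theorem AR_independence_number (r : ℕ) (hr : 2 ≤ r) :
    IsIndep (AR r)
      ↑((Finset.range r).image fun n : ℕ => (n : ZMod (3 * r - 1))) ∧
    ((Finset.range r).image fun n : ℕ => (n : ZMod (3 * r - 1))).card = r ∧
    ∀ S : Finset (ZMod (3 * r - 1)), IsIndep (AR r) ↑S → S.card ≤ r := by
  haveI : NeZero (3 * r - 1) := ⟨by omega⟩
  have hvsmall : ∀ a : ℕ, a < 3 * r - 1 → ((a : ZMod (3 * r - 1))).val = a :=
    fun a ha => ZMod.val_cast_of_lt ha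
  refine ⟨?_, ?_, ?_⟩
  · -- independence of {0,...,r-1}
    intro x hx y hy hxy
    simp only [Finset.coe_image, Set.mem_image, Finset.mem_coe, Finset.mem_range] at hx hy
    obtain ⟨a, ha, rfl⟩ := hx
    obtain ⟨b, hb, rfl⟩ := hy
    rw [AR_adj_iff hr]
    rintro ⟨hne, h1, h2⟩
    rcases le_or_gt b a with hba | hab
    · have heq : (a : ZMod (3 * r - 1)) - b = ((a - b : ℕ) : ZMod (3 * r - 1)) := by
        rw [Nat.cast_sub hba]
      rw [heq, hvsmall _ (by omega)] at h1 h2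
      omega
    · have heq : (a : ZMod (3 * r - 1)) - b = -(((b - a : ℕ) : ZMod (3 * r - 1))) := by
        rw [Nat.cast_sub hab.le]; ring
      have hne0 : ((b - a : ℕ) : ZMod (3 * r - 1)) ≠ 0 := by
        intro h
        have := congrArg ZMod.val h
        rw [hvsmall _ (by omega), ZMod.val_zero] at this
        omega
      rw [heq, ZMod.neg_val, if_neg hne0, hvsmall _ (by omega)] at h1 h2
      omega
  · -- cardinality
    rw [Finset.card_image_of_injOn, Finset.card_range]
    intro a ha b hb h
    simp only [Finset.mem_coe, Finset.mem_range] at ha hb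
    have := congrArg ZMod.val h
    rwa [hvsmall _ (by omega), hvsmall _ (by omega)] at this
  · -- upper bound
    intro S hS
    rcases S.eq_empty_or_nonempty with rfl | hne
    · simp
    obtain ⟨a, ha⟩ := hne
    set f : ZMod (3 * r - 1) → ℤ := fun s =>
      if (s - a).val ≤ r - 1 then ((s - a).val : ℤ)
      else ((s - a).val : ℤ) - (3 * r - 1 : ℕ) with hf
    have hindep : ∀ s ∈ S, ∀ t ∈ S, s ≠ t →
        (s - t).val ≤ r - 1 ∨ 2 * r ≤ (s - t).val := by
      intro s hs t ht hst
      have hna : ¬ (AR r).Adj s t := hS (Finset.mem_coe.mpr hs) (Finset.mem_coe.mpr ht) hst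
      rw [AR_adj_iff hr] at hna
      push_neg at hna
      have hv := ZMod.val_lt (s - t)
      have := hna hst
      omega
    have hbound : ∀ s ∈ S, -((r : ℤ) - 1) ≤ f s ∧ f s ≤ (r : ℤ) - 1 := by
      intro s hs
      by_cases hc : (s - a).val ≤ r - 1
      · have h1 : f s = ((s - a).val : ℤ) := if_pos hc
        rw [h1]
        omega
      · have h2 : f s = ((s - a).val : ℤ) - (3 * r - 1 : ℕ) := if_neg hc
        have hsa : s ≠ a := by
          intro h; subst h; simp only [sub_self, ZMod.val_zero] at hc; omega
        have hv2 : 2 * r ≤ (s - a).val := by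
          rcases hindep s hs a ha hsa with h | h
          · omega
          · exact h
        have hvlt := ZMod.val_lt (s - a)
        rw [h2]
        omega
    have hcast : ∀ s : ZMod (3 * r - 1), ((f s : ℤ) : ZMod (3 * r - 1)) = s - a := by
      intro s
      rw [hf]
      simp only []
      split_ifs with hc
      · rw [Int.cast_natCast]
        exact ZMod.natCast_rightInverse _
      · rw [Int.cast_sub, Int.cast_natCast, Int.cast_natCast, ZMod.natCast_self, sub_zero]
        exact ZMod.natCast_rightInverse _
    have hkey : ∀ s ∈ S, ∀ t ∈ S, f s - f t ≤ (r : ℤ) - 1 := by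
      intro s hs t ht
      by_cases hst : s = t
      · subst hst; simp; omega
      · have hv := hindep s hs t ht hst
        have hvlt := ZMod.val_lt (s - t)
        have hvne : (s - t).val ≠ 0 := by
          intro h
          exact hst (sub_eq_zero.mp ((ZMod.val_eq_zero _).mp h))
        have hd : (((f s - f t) - ((s - t).val : ℤ) : ℤ) : ZMod (3 * r - 1)) = 0 := by
          rw [Int.cast_sub, Int.cast_sub, hcast, hcast, Int.cast_natCast,
            ZMod.natCast_rightInverse]
          ring
        obtain ⟨k, hk⟩ := (ZMod.intCast_zmod_eq_zero_iff_dvd _ _).mp hd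
        have hbs := hbound s hs
        have hbt := hbound t ht
        have hub : f s - f t - ((s - t).val : ℤ) < (3 * r - 1 : ℕ) := by omega
        have hlb : -2 * ((3 * r - 1 : ℕ) : ℤ) < f s - f t - ((s - t).val : ℤ) := by omega
        rw [hk] at hub hlb
        have hNpos : (0 : ℤ) < ((3 * r - 1 : ℕ) : ℤ) := by exact_mod_cast (by omega : 0 < 3 * r - 1)
        rcases kbound ((3 * r - 1 : ℕ) : ℤ) k hNpos hlb hub with rfl | rfl
        · rw [mul_zero] at hk
          omega
        · rw [mul_neg_one] at hk
          omega
    have hinj : Set.InjOn f ↑S := by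
      intro s hs t ht h
      have hval : (s - a).val = (t - a).val := by
        rw [hf] at h
        simp only [] at h
        have hvs := ZMod.val_lt (s - a)
        have hvt := ZMod.val_lt (t - a)
        split_ifs at h with h1 h2 h2 <;> omega
      have h2 : s - a = t - a := ZMod.val_injective (3 * r - 1) hval
      exact sub_left_injective h2
    have hmin := S.exists_mem_eq_inf' ⟨a, ha⟩ f
    obtain ⟨t0, ht0, hm⟩ := hmin
    calc S.card ≤ (Finset.Icc (S.inf' ⟨a, ha⟩ f) (S.inf' ⟨a, ha⟩ f + ((r : ℤ) - 1))).card := by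
          apply Finset.card_le_card_of_injOn f _ hinj
          intro s hs
          rw [Finset.mem_coe, Finset.mem_Icc]
          refine ⟨Finset.inf'_le f hs, ?_⟩
          rw [hm]
          have := hkey s hs t0 ht0
          linarith
      _ = r := by
          rw [Int.card_Icc]
          omega
end
end

section
/- Let G be a finite simple graph, let (Π_k)_{k∈V(G)} be a rank-r projective representation of G in dimension d, let w : V(G) → ℝ≥0 satisfy Σ_{k∈I} w_k ≤ 1 for every independent set I of G, and let η be a real number with Σ_k w_k Π_k ≥ η·𝟙 in the Loewner order. Then η·d ≤ r·χ_f(G), where χ_f(G) is the fractional chromatic number of G. -/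
open scoped Classical ComplexOrder Kronecker
noncomputable section

/-- The trace of a Hermitian complex matrix is the sum of its eigenvalues. -/
lemma trace_eq_sum_eigen' {n : Type*} [Fintype n] [DecidableEq n] {A : Matrix n n ℂ}
    (hA : A.IsHermitian) : A.trace = ((∑ i, hA.eigenvalues i : ℝ) : ℂ) := by
  conv_lhs => rw [hA.spectral_theorem]
  rw [Unitary.conjStarAlgAut_apply, Matrix.trace_mul_cycle,
    show star (hA.eigenvectorUnitary : Matrix n n ℂ) * (hA.eigenvectorUnitary : Matrix n n ℂ) = 1
      from hA.eigenvectorUnitary.2.1, one_mul, Matrix.trace_diagonal]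
  push_cast
  rfl

open Matrix in
/-- Eigenvalues of a Hermitian idempotent are 0 or 1. -/
lemma eigen_zero_or_one' {n : Type*} [Fintype n] [DecidableEq n] {A : Matrix n n ℂ}
    (hA : A.IsHermitian) (hid : A * A = A) (j : n) :
    hA.eigenvalues j = 0 ∨ hA.eigenvalues j = 1 := by
  set μ := hA.eigenvalues j with hμ
  set v := ⇑(hA.eigenvectorBasis j) with hv
  have hev : A *ᵥ v = μ • v := hA.mulVec_eigenvectorBasis j
  have hvne : v ≠ 0 := by
    intro h
    apply hA.eigenvectorBasis.orthonormal.ne_zero j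
    ext i
    exact congrFun h i
  have h2 : (μ * μ) • v = μ • v := by
    calc (μ * μ) • v = A *ᵥ (A *ᵥ v) := by
          rw [hev, Matrix.mulVec_smul, hev, smul_smul]
      _ = (A * A) *ᵥ v := by rw [Matrix.mulVec_mulVec]
      _ = μ • v := by rw [hid, hev]
  have h3 : (μ * μ - μ) • v = 0 := by rw [sub_smul, h2, sub_self]
  rcases smul_eq_zero.mp h3 with h | h
  · have : μ * (μ - 1) = 0 := by ring_nf; linarith [h]
    rcases mul_eq_zero.mp this with h' | h'
    · exact Or.inl h'
    · exact Or.inr (by linarith)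
  · exact absurd h hvne

/-- A Hermitian idempotent has trace equal to its rank. -/
lemma trace_proj' {n : Type*} [Fintype n] [DecidableEq n] {A : Matrix n n ℂ}
    (hA : A.IsHermitian) (hid : A * A = A) : A.trace = (A.rank : ℂ) := by
  rw [trace_eq_sum_eigen' hA, hA.rank_eq_card_non_zero_eigs]
  norm_cast
  rw [Fintype.card_subtype]
  have h1 : ∀ j : n, hA.eigenvalues j = if hA.eigenvalues j ≠ 0 then (1 : ℝ) else 0 := by
    intro j
    rcases eigen_zero_or_one' hA hid j with h | h <;> simp [h]
  calc ∑ i, hA.eigenvalues i = ∑ i, if hA.eigenvalues i ≠ 0 then (1 : ℝ) else 0 :=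
        Finset.sum_congr rfl fun i _ => h1 i
    _ = ((Finset.univ.filter fun i => hA.eigenvalues i ≠ 0).card : ℝ) := by
        rw [Finset.sum_boole]

theorem eta_dim_le_rank_fracChrom {α : Type*} [Fintype α] (G : SimpleGraph α)
    (r d : ℕ)
    (P : α → Matrix (Fin d) (Fin d) ℂ)
    (hherm : ∀ i, (P i).IsHermitian) (hidem : ∀ i, P i * P i = P i)
    (hrank : ∀ i, (P i).rank = r)
    (horth : ∀ i j, G.Adj i j → P i * P j = 0)
    (w : α → ℝ) (hw0 : ∀ i, 0 ≤ w i)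
    (hwI : ∀ I : Finset α, IsIndep G ↑I → ∑ i ∈ I, w i ≤ 1)
    (η : ℝ)
    (hη : Matrix.PosSemidef (∑ i, (w i : ℂ) • P i - (η : ℂ) • 1)) :
    η * d ≤ r * fracChrom G := by
  classical
  -- Step 1: η * d ≤ r * ∑ w, via traces.
  set M : Matrix (Fin d) (Fin d) ℂ := ∑ i, (w i : ℂ) • P i - (η : ℂ) • 1 with hM
  have htr1 : M.trace = ((∑ j, hη.1.eigenvalues j : ℝ) : ℂ) := trace_eq_sum_eigen' hη.1
  have hnn : (0 : ℝ) ≤ ∑ j, hη.1.eigenvalues j :=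
    Finset.sum_nonneg fun j _ => hη.eigenvalues_nonneg j
  have htrP : ∀ i, (P i).trace = (r : ℂ) := by
    intro i
    rw [trace_proj' (hherm i) (hidem i), hrank i]
  have htr2 : M.trace = (((∑ i, w i * r) - η * d : ℝ) : ℂ) := by
    rw [hM, Matrix.trace_sub, Matrix.trace_sum, Matrix.trace_smul, Matrix.trace_one]
    have : ∀ i ∈ (Finset.univ : Finset α),
        ((w i : ℂ) • P i).trace = ((w i * r : ℝ) : ℂ) := by
      intro i _
      rw [Matrix.trace_smul, htrP i]
      push_cast
      simp [smul_eq_mul]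
    rw [Finset.sum_congr rfl this]
    push_cast
    simp [Finset.card_univ, smul_eq_mul]
  have hre : ((∑ i, w i * r) - η * d : ℝ) = ∑ j, hη.1.eigenvalues j := by
    have := htr2.symm.trans htr1
    exact_mod_cast this
  have step1 : η * d ≤ (∑ i, w i) * r := by
    have : η * d ≤ ∑ i, w i * r := by linarith
    simpa [Finset.sum_mul] using this
  -- Step 2: ∑ w ≤ fracChrom G.
  have step2 : ∑ i, w i ≤ fracChrom G := by
    unfold fracChrom fracChromW
    apply le_csInf
    · -- the feasible set is nonempty: color by singletons
      refine ⟨∑ I ∈ indepFinsets G, (fun I : Finset α => if I.card = 1 then (1 : ℝ) else 0) I,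
        fun I : Finset α => if I.card = 1 then (1 : ℝ) else 0, ⟨?_, ?_⟩, rfl⟩
      · intro I; dsimp only; split <;> norm_num
      · intro v
        have hmem : ({v} : Finset α) ∈ (indepFinsets G).filter fun I => v ∈ I := by
          rw [Finset.mem_filter]
          constructor
          · simp only [indepFinsets, Finset.mem_filter, Finset.mem_univ, true_and]
            simp only [IsIndep, Finset.coe_singleton]
            exact Set.pairwise_singleton _ _
          · exact Finset.mem_singleton_self v
        calc (1 : ℝ) = (fun I : Finset α => if I.card = 1 then (1 : ℝ) else 0) {v} := by simp
          _ ≤ _ := Finset.single_le_sum (f := fun I : Finset α => if I.card = 1 then (1 : ℝ) else 0)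
              (fun I _ => by split <;> norm_num) hmem
    · -- ∑ w is a lower bound
      rintro x ⟨z, ⟨hz0, hzc⟩, rfl⟩
      have hstep : ∑ v, w v ≤ ∑ v, w v * ∑ I ∈ (indepFinsets G).filter (fun I => v ∈ I), z I := by
        apply Finset.sum_le_sum
        intro v _
        exact le_mul_of_one_le_right (hw0 v) (hzc v)
      have hswap : ∑ v, w v * ∑ I ∈ (indepFinsets G).filter (fun I => v ∈ I), z I
          = ∑ I ∈ indepFinsets G, (∑ v ∈ I, w v) * z I := by
        have h1 : ∀ v : α, w v * ∑ I ∈ (indepFinsets G).filter (fun I => v ∈ I), z I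
            = ∑ I ∈ indepFinsets G, if v ∈ I then w v * z I else 0 := by
          intro v
          rw [Finset.mul_sum, Finset.sum_filter]
        rw [Finset.sum_congr rfl fun v _ => h1 v, Finset.sum_comm]
        apply Finset.sum_congr rfl
        intro I _
        rw [← Finset.sum_filter, Finset.sum_mul]
        apply Finset.sum_congr
        · ext v; simp
        · intro v _; rfl
      have hlast : ∑ I ∈ indepFinsets G, (∑ v ∈ I, w v) * z I ≤ ∑ I ∈ indepFinsets G, z I := by
        apply Finset.sum_le_sum
        intro I hI
        have hIindep : IsIndep G ↑I := by
          simpa [indepFinsets] using hI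
        have h1 := hwI I hIindep
        have h2 := hz0 I
        nlinarith
      linarith
  -- combine
  have hr0 : (0 : ℝ) ≤ (r : ℝ) := Nat.cast_nonneg r
  calc η * d ≤ (∑ i, w i) * r := step1
    _ ≤ fracChrom G * r := mul_le_mul_of_nonneg_right step2 hr0
    _ = r * fracChrom G := mul_comm _ _
end
end
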